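/- Let R = F₁ × F₂ × ⋯ × Fₙ with n ≥ 3 and each Fᵢ a field. Then ZA(R) is connected with diameter exactly 3: any two distinct vertices are joined by a path of length at most 3, and the vertices (0,1,0,…,0) and (1,0,…,0) are at distance exactly 3. -/

import Mathlib

lemma ann_inter_eq {n : ℕ} {F : Fin n → Type*} [∀ i, Field (F i)] (a b : Π i, F i) :
    ({r : Π i, F i | r * a = 0} ∩ {r : Π i, F i | r * b = 0} = {0}) ↔
      ∀ i, a i ≠ 0 ∨ b i ≠ 0 := by
  constructor
  · intro h i
    by_contra hc
    push_neg at hc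
    have hmem : Pi.single i (1 : F i) ∈
        ({r : Π i, F i | r * a = 0} ∩ {r : Π i, F i | r * b = 0}) := by
      constructor <;>
      · show _ * _ = 0
        funext j
        by_cases hj : j = i
        · subst hj; simp [Pi.mul_apply, hc.1, hc.2]
        · simp [Pi.mul_apply, Pi.single_eq_of_ne hj]
    rw [h] at hmem
    have := congrFun hmem i
    simp at this
  · intro h
    ext r
    simp only [Set.mem_inter_iff, Set.mem_setOf_eq, Set.mem_singleton_iff]
    constructor
    · rintro ⟨h1, h2⟩
      funext i
      have e1 := congrFun h1 i
      have e2 := congrFun h2 i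
      simp only [Pi.mul_apply, Pi.zero_apply] at e1 e2
      rcases h i with ha | hb
      · rcases mul_eq_zero.mp e1 with h' | h'
        · exact h'
        · exact absurd h' ha
      · rcases mul_eq_zero.mp e2 with h' | h'
        · exact h'
        · exact absurd h' hb
    · rintro rfl; simp

lemma not_unit_iff {n : ℕ} {F : Fin n → Type*} [∀ i, Field (F i)] (a : Π i, F i) :
    ¬ IsUnit a ↔ ∃ i, a i = 0 := by
  constructor
  · intro h
    by_contra hc
    push_neg at hc
    exact h (IsUnit.of_mul_eq_one (a := a) (fun i => (a i)⁻¹)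
      (funext fun i => mul_inv_cancel₀ (hc i)))
  · rintro ⟨i, hi⟩ hu
    obtain ⟨w, hw⟩ := hu.exists_right_inv
    have := congrFun hw i
    simp only [Pi.mul_apply, Pi.one_apply, hi, zero_mul] at this
    exact zero_ne_one this

lemma ne_zero_iff {n : ℕ} {F : Fin n → Type*} [∀ i, Field (F i)] (a : Π i, F i) :
    a ≠ 0 ↔ ∃ i, a i ≠ 0 := by
  rw [Function.ne_iff]; simp

theorem stmt12 {n : ℕ} (hn : 3 ≤ n) (F : Fin n → Type*) [∀ i, Field (F i)]
    (u v : Π i, F i)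
    (hu : u = fun i => if i = (⟨1, by omega⟩ : Fin n) then 1 else 0)
    (hv : v = fun i => if i = (⟨0, by omega⟩ : Fin n) then 1 else 0) :
    (∀ x y : Π i, F i, x ≠ 0 → ¬ IsUnit x → y ≠ 0 → ¬ IsUnit y → x ≠ y →
      ∃ p : List (Π i, F i),
        p.Chain' (fun a b => a ≠ b ∧
          {r : Π i, F i | r * a = 0} ∩ {r : Π i, F i | r * b = 0} = {0}) ∧
        (∀ a ∈ p, a ≠ 0 ∧ ¬ IsUnit a) ∧
        p.head? = some x ∧ p.getLast? = some y ∧ p.length ≤ 4) ∧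
    ¬ ∃ p : List (Π i, F i),
        p.Chain' (fun a b => a ≠ b ∧
          {r : Π i, F i | r * a = 0} ∩ {r : Π i, F i | r * b = 0} = {0}) ∧
        (∀ a ∈ p, a ≠ 0 ∧ ¬ IsUnit a) ∧
        p.head? = some u ∧ p.getLast? = some v ∧ p.length ≤ 3 := by
  classical
  set i0 : Fin n := ⟨0, by omega⟩ with hi0
  set i1 : Fin n := ⟨1, by omega⟩ with hi1
  set i2 : Fin n := ⟨2, by omega⟩ with hi2
  constructor
  · -- existence of paths of length ≤ 3
    intro x y hx0 hxu hy0 hyu hxy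
    obtain ⟨ix, hix⟩ := (ne_zero_iff x).mp hx0      -- x ix ≠ 0
    obtain ⟨jx, hjx⟩ := (not_unit_iff x).mp hxu     -- x jx = 0
    obtain ⟨iy, hiy⟩ := (ne_zero_iff y).mp hy0      -- y iy ≠ 0
    obtain ⟨jy, hjy⟩ := (not_unit_iff y).mp hyu     -- y jy = 0
    by_cases hI : ∃ i, x i ≠ 0 ∧ y i ≠ 0
    · -- supports intersect: path [x, c, y]
      obtain ⟨k, hk1, hk2⟩ := hI
      set c : Π i, F i := fun i => if x i ≠ 0 ∧ y i ≠ 0 then 0 else 1 with hc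
      have hck : c k = 0 := by simp [hc, hk1, hk2]
      have hcval : ∀ i, x i = 0 ∨ y i = 0 → c i = 1 := by
        intro i hi
        rcases hi with hi | hi <;> simp [hc, hi]
      refine ⟨[x, c, y], ?_, ?_, rfl, rfl, by norm_num⟩
      · refine List.isChain_cons_cons.mpr ⟨⟨?_, ?_⟩, List.isChain_cons_cons.mpr
          ⟨⟨?_, ?_⟩, List.isChain_singleton _⟩⟩
        · intro h; rw [h] at hk1; exact hk1 hck
        · rw [ann_inter_eq]
          intro i
          by_cases hxi : x i = 0
          · exact Or.inr (by rw [hcval i (Or.inl hxi)]; exact one_ne_zero)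
          · exact Or.inl hxi
        · intro h; rw [← h] at hk2; exact hk2 hck
        · rw [ann_inter_eq]
          intro i
          by_cases hyi : y i = 0
          · exact Or.inl (by rw [hcval i (Or.inr hyi)]; exact one_ne_zero)
          · exact Or.inr hyi
      · intro a ha
        simp only [List.mem_cons, List.not_mem_nil, or_false] at ha
        rcases ha with rfl | rfl | rfl
        · exact ⟨hx0, hxu⟩
        · refine ⟨(ne_zero_iff c).mpr ⟨jx, ?_⟩, (not_unit_iff c).mpr ⟨k, hck⟩⟩
          rw [hcval jx (Or.inl hjx)]; exact one_ne_zero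
        · exact ⟨hy0, hyu⟩
    · -- disjoint supports: path [x, a, b, y]
      push_neg at hI
      set a : Π i, F i := fun i => if x i = 0 then 1 else 0 with ha
      set b : Π i, F i := fun i => if y i = 0 then 1 else 0 with hb
      have haix : a ix = 0 := by simp [ha, hix]
      have hajx : a jx = 1 := by simp [ha, hjx]
      have hbiy : b iy = 0 := by simp [hb, hiy]
      have hbjy : b jy = 1 := by simp [hb, hjy]
      have hbix : b ix = 1 := by simp [hb, hI ix hix]
      refine ⟨[x, a, b, y], ?_, ?_, rfl, rfl, by norm_num⟩
      · refine List.isChain_cons_cons.mpr ⟨⟨?_, ?_⟩, List.isChain_cons_cons.mpr ⟨⟨?_, ?_⟩,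
          List.isChain_cons_cons.mpr ⟨⟨?_, ?_⟩, List.isChain_singleton _⟩⟩⟩
        · intro h; rw [h] at hix; exact hix haix
        · rw [ann_inter_eq]
          intro i
          by_cases hxi : x i = 0
          · exact Or.inr (by simp [ha, hxi])
          · exact Or.inl hxi
        · intro h
          have := congrFun h ix
          rw [haix, hbix] at this
          exact one_ne_zero this.symm
        · rw [ann_inter_eq]
          intro i
          by_cases hxi : x i = 0
          · exact Or.inl (by simp [ha, hxi])
          · exact Or.inr (by simp [hb, hI i hxi])
        · intro h
          have := congrFun h iy
          rw [hbiy] at this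
          exact hiy this.symm
        · rw [ann_inter_eq]
          intro i
          by_cases hyi : y i = 0
          · exact Or.inl (by simp [hb, hyi])
          · exact Or.inr hyi
      · intro z hz
        simp only [List.mem_cons, List.not_mem_nil, or_false] at hz
        rcases hz with rfl | rfl | rfl | rfl
        · exact ⟨hx0, hxu⟩
        · exact ⟨(ne_zero_iff a).mpr ⟨jx, by rw [hajx]; exact one_ne_zero⟩,
            (not_unit_iff a).mpr ⟨ix, haix⟩⟩
        · exact ⟨(ne_zero_iff b).mpr ⟨jy, by rw [hbjy]; exact one_ne_zero⟩,
            (not_unit_iff b).mpr ⟨iy, hbiy⟩⟩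
        · exact ⟨hy0, hyu⟩
  · -- no path of length ≤ 2 edges from u to v
    have h10 : i1 ≠ i0 := by simp [hi0, hi1, Fin.ext_iff]
    have h21 : i2 ≠ i1 := by simp [hi1, hi2, Fin.ext_iff]
    have h20 : i2 ≠ i0 := by simp [hi0, hi2, Fin.ext_iff]
    have hune : ∀ i, u i ≠ 0 → i = i1 := by
      intro i hi
      by_contra h
      rw [hu] at hi
      simp only [if_neg h] at hi
      exact hi rfl
    have hvne : ∀ i, v i ≠ 0 → i = i0 := by
      intro i hi
      by_contra h
      rw [hv] at hi
      simp only [if_neg h] at hi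
      exact hi rfl
    have hu2 : u i2 = 0 := by rw [hu]; simp [if_neg h21]
    have hv2 : v i2 = 0 := by rw [hv]; simp [if_neg h20]
    have huv : u ≠ v := by
      intro h
      have := congrFun h i1
      rw [hu, hv] at this
      simp only [if_pos rfl, if_neg h10] at this
      exact one_ne_zero this
    rintro ⟨p, hchain, hvert, hhead, hlast, hlen⟩
    rcases p with _ | ⟨s, _ | ⟨t, _ | ⟨w, _ | ⟨z, rest⟩⟩⟩⟩
    · simp at hhead
    · simp only [List.head?_cons, Option.some.injEq] at hhead
      simp only [List.getLast?_singleton, Option.some.injEq] at hlast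
      exact huv (hhead ▸ hlast ▸ rfl)
    · simp only [List.head?_cons, Option.some.injEq] at hhead
      have hlast' : t = v := by
        have : List.getLast? [s, t] = some t := rfl
        rw [this] at hlast
        injection hlast
      subst hhead hlast'
      unfold List.Chain' at hchain
      rw [List.isChain_cons_cons] at hchain
      have := (ann_inter_eq _ _).mp hchain.1.2 i2
      rcases this with h | h
      · exact h hu2
      · exact h hv2
    · simp only [List.head?_cons, Option.some.injEq] at hhead
      have hlast' : w = v := by
        have : List.getLast? [s, t, w] = some w := rfl
        rw [this] at hlast
        injection hlast
      subst hhead hlast'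
      unfold List.Chain' at hchain
      rw [List.isChain_cons_cons, List.isChain_cons_cons] at hchain
      obtain ⟨i, hti⟩ := (not_unit_iff t).mp (hvert t (by simp)).2
      have h1 := (ann_inter_eq _ _).mp hchain.1.2 i
      have h2 := (ann_inter_eq _ _).mp hchain.2.1.2 i
      have hii1 : i = i1 := hune i (h1.resolve_right (fun h => h hti))
      have hii0 : i = i0 := hvne i (h2.resolve_left (fun h => h hti))
      exact h10 (hii1 ▸ hii0)
    · simp only [List.length_cons] at hlen
      omega
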